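/- Let μ be a measure, 1 ≤ p, and θ > 3 real, and let u ∈ L^θ(μ) ∩ L^{3θ}(μ). For any λ₁, λ₂ > 1 with 1/λ₁ + 1/λ₂ = 1 and θ ≤ 4λ₁ ≤ 3θ and θ ≤ (θ−2)λ₂ ≤ 3θ, one has ‖u‖_{L^{4λ₁}}² · ‖u‖_{L^{(θ−2)λ₂}}^{(θ−2)/2} ≤ ‖u‖_{L^θ}^{θ/2 − 1/2} · ‖u‖_{L^{3θ}}^{3/2}. -/

import Mathlib

open MeasureTheory

open ENNReal in
/-- Lp interpolation: for `1/r = α/p + (1-α)/q` with `0 ≤ α ≤ 1`,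
`‖u‖_r ≤ ‖u‖_p ^ α * ‖u‖_q ^ (1-α)`. -/
lemma eLpNorm'_interp {Ω : Type*} [MeasurableSpace Ω] {μ : Measure Ω} {p q r α : ℝ}
    (hp : 0 < p) (hq : 0 < q) (hr : 0 < r) (hα0 : 0 ≤ α) (hα1 : α ≤ 1)
    (hrep : 1 / r = α / p + (1 - α) / q)
    {u : Ω → ℝ} (hu : AEMeasurable u μ) :
    eLpNorm' u r μ ≤ eLpNorm' u p μ ^ α * eLpNorm' u q μ ^ (1 - α) := by
  rcases eq_or_lt_of_le hα0 with h0 | h0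
  · -- α = 0, then r = q
    have hrq : r = q := by
      rw [← h0] at hrep
      field_simp at hrep
      nlinarith
    rw [← h0, hrq]
    simp
  rcases eq_or_lt_of_le hα1 with h1 | h1
  · -- α = 1, then r = p
    have hrp : r = p := by
      rw [h1] at hrep
      field_simp at hrep
      nlinarith
    rw [h1, hrp]
    simp
  -- main case 0 < α < 1
  set s : ℝ := p / (α * r) with hs_def
  set t : ℝ := q / ((1 - α) * r) with ht_def
  have hαr : 0 < α * r := mul_pos h0 hr
  have h1α : 0 < 1 - α := by linarith
  have h1αr : 0 < (1 - α) * r := mul_pos h1α hr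
  have hs : 0 < s := div_pos hp hαr
  have ht : 0 < t := div_pos hq h1αr
  have hsum : 1 / s + 1 / t = 1 := by
    rw [hs_def, ht_def, one_div_div, one_div_div]
    have := hrep
    field_simp at this ⊢
    nlinarith [this]
  have hconj : s.HolderConjugate t := by
    exact ⟨by rw [inv_one, ← one_div, ← one_div]; exact hsum, hs, ht⟩
  set F : Ω → ℝ≥0∞ := fun x => (‖u x‖₊ : ℝ≥0∞) ^ (α * r) with hF
  set G : Ω → ℝ≥0∞ := fun x => (‖u x‖₊ : ℝ≥0∞) ^ ((1 - α) * r) with hG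
  have hFm : AEMeasurable F μ := hu.enorm.pow_const _
  have hGm : AEMeasurable G μ := hu.enorm.pow_const _
  have holder := ENNReal.lintegral_mul_le_Lp_mul_Lq μ hconj hFm hGm
  have hFG : ∀ x, (F * G) x = (‖u x‖₊ : ℝ≥0∞) ^ r := by
    intro x
    simp only [Pi.mul_apply, hF, hG]
    rw [← ENNReal.rpow_add_of_nonneg _ _ hαr.le h1αr.le]
    congr 1
    ring
  have hFs : ∀ x, F x ^ s = (‖u x‖₊ : ℝ≥0∞) ^ p := by
    intro x
    rw [hF, ← ENNReal.rpow_mul]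
    congr 1
    rw [hs_def]
    field_simp
  have hGt : ∀ x, G x ^ t = (‖u x‖₊ : ℝ≥0∞) ^ q := by
    intro x
    rw [hG, ← ENNReal.rpow_mul]
    congr 1
    rw [ht_def]
    field_simp
  have h1s_eq : 1 / s = α * r / p := by rw [hs_def, one_div_div]
  have h1t_eq : 1 / t = (1 - α) * r / q := by rw [ht_def, one_div_div]
  have key : (∫⁻ x, (‖u x‖₊ : ℝ≥0∞) ^ r ∂μ) ≤
      (∫⁻ x, (‖u x‖₊ : ℝ≥0∞) ^ p ∂μ) ^ (α * r / p) *
        (∫⁻ x, (‖u x‖₊ : ℝ≥0∞) ^ q ∂μ) ^ ((1 - α) * r / q) := by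
    calc (∫⁻ x, (‖u x‖₊ : ℝ≥0∞) ^ r ∂μ) = ∫⁻ x, (F * G) x ∂μ := by
          refine lintegral_congr fun x => (hFG x).symm
      _ ≤ (∫⁻ x, F x ^ s ∂μ) ^ (1 / s) * (∫⁻ x, G x ^ t ∂μ) ^ (1 / t) := holder
      _ = (∫⁻ x, (‖u x‖₊ : ℝ≥0∞) ^ p ∂μ) ^ (α * r / p) *
            (∫⁻ x, (‖u x‖₊ : ℝ≥0∞) ^ q ∂μ) ^ ((1 - α) * r / q) := by
          rw [← h1s_eq, ← h1t_eq]
          congr 1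
          · congr 1; exact lintegral_congr fun x => hFs x
          · congr 1; exact lintegral_congr fun x => hGt x
  rw [eLpNorm', eLpNorm', eLpNorm']
  calc (∫⁻ x, (‖u x‖₊ : ℝ≥0∞) ^ r ∂μ) ^ (1 / r)
      ≤ ((∫⁻ x, (‖u x‖₊ : ℝ≥0∞) ^ p ∂μ) ^ (α * r / p) *
          (∫⁻ x, (‖u x‖₊ : ℝ≥0∞) ^ q ∂μ) ^ ((1 - α) * r / q)) ^ (1 / r) :=
        ENNReal.rpow_le_rpow key (by positivity)
    _ = ((∫⁻ x, (‖u x‖₊ : ℝ≥0∞) ^ p ∂μ) ^ (1 / p)) ^ α *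
          ((∫⁻ x, (‖u x‖₊ : ℝ≥0∞) ^ q ∂μ) ^ (1 / q)) ^ (1 - α) := by
        rw [ENNReal.mul_rpow_of_nonneg _ _ (by positivity), ← ENNReal.rpow_mul,
          ← ENNReal.rpow_mul, ← ENNReal.rpow_mul, ← ENNReal.rpow_mul]
        congr 1 <;> congr 1 <;> field_simp <;> ring

/-- The interpolation estimate ‖u‖_{4λ₁}² ‖u‖_{(θ−2)λ₂}^{(θ−2)/2}
≤ ‖u‖_θ^{θ/2 − 1/2} ‖u‖_{3θ}^{3/2}. -/
theorem interpolation_estimate {Ω : Type*} [MeasurableSpace Ω] (μ : Measure Ω)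
    (θ l₁ l₂ : ℝ) (hθ : 3 < θ) (hl₁ : 1 < l₁) (hl₂ : 1 < l₂)
    (hconj : 1 / l₁ + 1 / l₂ = 1)
    (h₁ : θ ≤ 4 * l₁) (h₁' : 4 * l₁ ≤ 3 * θ)
    (h₂ : θ ≤ (θ - 2) * l₂) (h₂' : (θ - 2) * l₂ ≤ 3 * θ)
    (u : Ω → ℝ) (hu : MemLp u (ENNReal.ofReal θ) μ)
    (hu' : MemLp u (ENNReal.ofReal (3 * θ)) μ) :
    eLpNorm u (ENNReal.ofReal (4 * l₁)) μ ^ (2 : ℝ) *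
        eLpNorm u (ENNReal.ofReal ((θ - 2) * l₂)) μ ^ ((θ - 2) / 2) ≤
      eLpNorm u (ENNReal.ofReal θ) μ ^ (θ / 2 - 1 / 2) *
        eLpNorm u (ENNReal.ofReal (3 * θ)) μ ^ ((3 : ℝ) / 2) := by
  have hθ0 : 0 < θ := by linarith
  have hθ2 : 0 < θ - 2 := by linarith
  have hl₁0 : 0 < l₁ := by linarith
  have hl₂0 : 0 < l₂ := by linarith
  have hr₁ : 0 < 4 * l₁ := by linarith
  have hr₂ : 0 < (θ - 2) * l₂ := mul_pos hθ2 hl₂0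
  have h3θ : 0 < 3 * θ := by linarith
  have hum : AEMeasurable u μ := hu.1.aemeasurable
  -- rewrite eLpNorm as eLpNorm'
  have etn : ∀ c : ℝ, 0 < c → eLpNorm u (ENNReal.ofReal c) μ = eLpNorm' u c μ := by
    intro c hc
    rw [eLpNorm_eq_eLpNorm' (by simp [hc]) ENNReal.ofReal_ne_top, ENNReal.toReal_ofReal hc.le]
  set α₁ : ℝ := (3 * θ / (4 * l₁) - 1) / 2 with hα₁def
  set α₂ : ℝ := (3 * θ / ((θ - 2) * l₂) - 1) / 2 with hα₂def
  have hα₁0 : 0 ≤ α₁ := by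
    rw [hα₁def]
    have : (1 : ℝ) ≤ 3 * θ / (4 * l₁) := (le_div_iff₀ hr₁).mpr (by linarith)
    linarith
  have hα₁1 : α₁ ≤ 1 := by
    rw [hα₁def]
    have : 3 * θ / (4 * l₁) ≤ 3 := (div_le_iff₀ hr₁).mpr (by linarith)
    linarith
  have hα₂0 : 0 ≤ α₂ := by
    rw [hα₂def]
    have : (1 : ℝ) ≤ 3 * θ / ((θ - 2) * l₂) := (le_div_iff₀ hr₂).mpr (by linarith)
    linarith
  have hα₂1 : α₂ ≤ 1 := by
    rw [hα₂def]
    have : 3 * θ / ((θ - 2) * l₂) ≤ 3 := (div_le_iff₀ hr₂).mpr (by linarith)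
    linarith
  have hrep₁ : 1 / (4 * l₁) = α₁ / θ + (1 - α₁) / (3 * θ) := by
    rw [hα₁def]; field_simp; ring
  have hrep₂ : 1 / ((θ - 2) * l₂) = α₂ / θ + (1 - α₂) / (3 * θ) := by
    rw [hα₂def]; field_simp; ring
  have hE₁ := eLpNorm'_interp hθ0 h3θ hr₁ hα₁0 hα₁1 hrep₁ hum (μ := μ)
  have hE₂ := eLpNorm'_interp hθ0 h3θ hr₂ hα₂0 hα₂1 hrep₂ hum (μ := μ)
  rw [etn _ hr₁, etn _ hr₂, etn _ hθ0, etn _ h3θ]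
  set A := eLpNorm' u θ μ
  set B := eLpNorm' u (3 * θ) μ
  have hw₂ : (0:ℝ) ≤ (θ - 2) / 2 := by linarith
  calc eLpNorm' u (4 * l₁) μ ^ (2:ℝ) * eLpNorm' u ((θ - 2) * l₂) μ ^ ((θ - 2) / 2)
      ≤ (A ^ α₁ * B ^ (1 - α₁)) ^ (2:ℝ) * (A ^ α₂ * B ^ (1 - α₂)) ^ ((θ - 2) / 2) :=
        mul_le_mul' (ENNReal.rpow_le_rpow hE₁ (by norm_num))
          (ENNReal.rpow_le_rpow hE₂ hw₂)
    _ = A ^ (α₁ * 2 + α₂ * ((θ - 2) / 2)) * B ^ ((1 - α₁) * 2 + (1 - α₂) * ((θ - 2) / 2)) := by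
        rw [ENNReal.mul_rpow_of_nonneg _ _ (by norm_num : (0:ℝ) ≤ 2),
          ENNReal.mul_rpow_of_nonneg _ _ hw₂, ← ENNReal.rpow_mul, ← ENNReal.rpow_mul,
          ← ENNReal.rpow_mul, ← ENNReal.rpow_mul, mul_mul_mul_comm,
          ← ENNReal.rpow_add_of_nonneg _ _ (mul_nonneg hα₁0 (by norm_num))
            (mul_nonneg hα₂0 hw₂),
          ← ENNReal.rpow_add_of_nonneg _ _ (mul_nonneg (by linarith) (by norm_num))
            (mul_nonneg (by linarith) hw₂)]
    _ = A ^ (θ / 2 - 1 / 2) * B ^ ((3:ℝ) / 2) := by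
        have e₁ : α₁ * 2 = 3 * θ / 4 * (1 / l₁) - 1 := by
          rw [hα₁def]; field_simp
        have e₂ : α₂ * ((θ - 2) / 2) = 3 * θ / 4 * (1 / l₂) - (θ - 2) / 4 := by
          rw [hα₂def]; field_simp; ring
        have sum1 : α₁ * 2 + α₂ * ((θ - 2) / 2) = θ / 2 - 1 / 2 := by
          linear_combination e₁ + e₂ + (3 * θ / 4) * hconj
        have sum2 : (1 - α₁) * 2 + (1 - α₂) * ((θ - 2) / 2) = (3:ℝ) / 2 := by
          nlinarith [sum1]
        rw [sum1, sum2]
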